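/- Let m be even and let m/2 be odd, N = nm+2, j₀ = m/2 + 2 (so j₀ is odd). Then the τ-orbit of {1, j₀} meets exactly two connected components of (Γ_{A_{nm−1}})ᵐ, and in each such component the vertices {1, j₀} and {1, j₀⁻} (with j₀⁻ = N+2−j₀) both lie on the 1-column and lie in the same τᵐ-orbit; consequently each of these two components has the shape of a Möbius band (its underlying quiver is ℤA_n modulo an auto-equivalence involving an odd power of Σ). -/

import Mathlib

open Sym2

/-- A diagonal of the regular `N`-gon: an unordered pair of distinct, non-adjacent vertices. -/
def IsDiag (N : ℕ) (d : Sym2 (ZMod N)) : Prop :=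
  ∃ a b : ZMod N, d = s(a, b) ∧ a ≠ b ∧ a ≠ b + 1 ∧ b ≠ a + 1

/-- The translation τ on diagonals: subtract 1 from both endpoints. -/
def tauD (N : ℕ) (d : Sym2 (ZMod N)) : Sym2 (ZMod N) :=
  d.map (fun x => x - 1)

/-- The τ-orbit of a diagonal. -/
def tauOrbit (N : ℕ) (d : Sym2 (ZMod N)) : Set (Sym2 (ZMod N)) :=
  {e | ∃ k : ℤ, e = d.map (fun x => x - (k : ZMod N))}

/-- The τ^m-orbit of a diagonal. -/
def taumOrbit (N m : ℕ) (d : Sym2 (ZMod N)) : Set (Sym2 (ZMod N)) :=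
  {e | ∃ k : ℤ, e = d.map (fun x => x - (k : ZMod N) * (m : ZMod N))}

/-- Arrows of the translation quiver Γ of diagonals of the N-gon. -/
def GammaArrow (N : ℕ) (d d' : Sym2 (ZMod N)) : Prop :=
  IsDiag N d ∧ IsDiag N d' ∧
    ∃ a b : ZMod N, d = s(a, b) ∧ (d' = s(a, b + 1) ∨ d' = s(a + 1, b))

/-- A sectional path of length m in Γ. -/
def SectionalPath (N m : ℕ) (p : ℕ → Sym2 (ZMod N)) : Prop :=
  (∀ t < m, GammaArrow N (p t) (p (t + 1))) ∧
    ∀ t, 1 ≤ t → t < m → tauD N (p (t + 1)) ≠ p (t - 1)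

/-- Arrows of the m-th power quiver (Γ)^m: sectional paths of length m. -/
def PowArrow (N m : ℕ) (d d' : Sym2 (ZMod N)) : Prop :=
  ∃ p : ℕ → Sym2 (ZMod N), SectionalPath N m p ∧ p 0 = d ∧ p m = d'

/-- Two vertices lie in the same connected component of (Γ)^m. -/
def SameComponent (N m : ℕ) (d d' : Sym2 (ZMod N)) : Prop :=
  Relation.ReflTransGen (fun a b => PowArrow N m a b ∨ PowArrow N m b a) d d'

/-- The connected component of (Γ)^m containing a given diagonal. -/
def componentOf (N m : ℕ) (d : Sym2 (ZMod N)) : Set (Sym2 (ZMod N)) :=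
  {e | SameComponent N m d e}

/-- The set of connected components of (Γ)^m. -/
def components (N m : ℕ) : Set (Set (Sym2 (ZMod N))) :=
  {S | ∃ d, IsDiag N d ∧ S = componentOf N m d}

/-- The action of τ⁻¹ on the translation quiver ℤA_n (vertices (p,i)):
one horizontal unit to the right. -/
def tauInvZA (v : ℤ × ℤ) : ℤ × ℤ := (v.1 + 1, v.2)

/-- The action of the shift Σ on ℤA_n: Σ(p,i) = (p+i, n+1-i), a translation by
(n+1)/2 horizontal units composed with the vertical reflection i ↦ n+1-i. -/
def sigmaZA (n : ℕ) (v : ℤ × ℤ) : ℤ × ℤ := (v.1 + v.2, (n : ℤ) + 1 - v.2)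

/-- `x` lies strictly between `a` and `b` in the clockwise cyclic order on ℤ/N. -/
def CycBtw (N : ℕ) (a x b : ZMod N) : Prop :=
  0 < (x - a).val ∧ (x - a).val < (b - a).val

/-- The diagonals (a,b) and (c,d) cross: exactly one of c, d lies strictly
between a and b in the cyclic order. -/
def CrossD (N : ℕ) (a b c d : ZMod N) : Prop :=
  Xor' (CycBtw N a c b) (CycBtw N a d b)

lemma isDiag_mk {N : ℕ} {a b : ZMod N} (h1 : a ≠ b) (h2 : a ≠ b + 1) (h3 : b ≠ a + 1) :
    IsDiag N s(a, b) := ⟨a, b, rfl, h1, h2, h3⟩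

lemma powArrow_mk {N m : ℕ} (hN : 2 ≤ N) (a b : ZMod N)
    (hd : ∀ t : ℕ, t ≤ m → a ≠ b + (t : ZMod N) ∧ a ≠ b + (t : ZMod N) + 1 ∧
      b + (t : ZMod N) ≠ a + 1) :
    PowArrow N m s(a, b) s(a, b + (m : ZMod N)) := by
  refine ⟨fun t => s(a, b + (t : ZMod N)), ⟨?_, ?_⟩, by simp, rfl⟩
  · intro t ht
    have e1 : b + ((t + 1 : ℕ) : ZMod N) = b + (t : ZMod N) + 1 := by push_cast; ring
    obtain ⟨d1, d2, d3⟩ := hd t (by omega)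
    obtain ⟨e1', e2', e3'⟩ := hd (t + 1) (by omega)
    rw [e1] at e1' e2' e3'
    show GammaArrow N s(a, b + (t : ZMod N)) s(a, b + ((t+1 : ℕ) : ZMod N))
    rw [e1]
    exact ⟨isDiag_mk d1 d2 d3, isDiag_mk e1' e2' e3', a, b + (t : ZMod N), rfl, Or.inl rfl⟩
  · intro t ht1 htm
    rw [tauD, Sym2.map_pair_eq]
    intro hEq
    have e2 : b + ((t + 1 : ℕ) : ZMod N) - 1 = b + (t : ZMod N) := by push_cast; ring
    rw [e2] at hEq
    rcases Sym2.eq_iff.mp hEq with ⟨h1, _⟩ | ⟨_, h2⟩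
    · haveI : Fact (1 < N) := ⟨by omega⟩
      exact one_ne_zero (sub_eq_self.mp h1)
    · exact (hd t (by omega)).1 h2.symm

lemma natCast_inj' {N k j : ℕ} (hk : k < N) (hj : j < N)
    (h : (k : ZMod N) = (j : ZMod N)) : k = j := by
  have := (ZMod.natCast_eq_natCast_iff' k j N).mp h
  rwa [Nat.mod_eq_of_lt hk, Nat.mod_eq_of_lt hj] at this

-- numeric nonequality helpers inside ZMod
lemma ne_of_nat {N k j : ℕ} (hk : k < N) (hj : j < N) (hne : k ≠ j) :
    ((k : ZMod N)) ≠ (j : ZMod N) := fun h => hne (natCast_inj' hk hj h)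


lemma step1 {N m g : ℕ} (hg2 : 2 ≤ g) (hgm : g + m + 2 ≤ N) (c : ZMod N) :
    PowArrow N m s(c, c + (g : ZMod N)) s(c, c + (g : ZMod N) + (m : ZMod N)) := by
  have h := powArrow_mk (m := m) (by omega) c (c + (g : ZMod N)) ?_
  · exact h
  · intro t ht
    refine ⟨fun h => ?_, fun h => ?_, fun h => ?_⟩
    · have e : ((g + t : ℕ) : ZMod N) = ((0 : ℕ) : ZMod N) := by push_cast; linear_combination -h
      have := natCast_inj' (by omega) (by omega) e
      omega
    · have e : ((g + t + 1 : ℕ) : ZMod N) = ((0 : ℕ) : ZMod N) := by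
        push_cast; linear_combination -h
      have := natCast_inj' (by omega) (by omega) e
      omega
    · have e : ((g + t : ℕ) : ZMod N) = ((1 : ℕ) : ZMod N) := by push_cast; linear_combination h
      have := natCast_inj' (by omega) (by omega) e
      omega

lemma step2 {N m g : ℕ} (hg2 : 2 ≤ g) (hgm : g + m + 2 ≤ N) (c : ZMod N) :
    PowArrow N m s(c, c + (g : ZMod N) + (m : ZMod N)) s(c + (m : ZMod N), c + (g : ZMod N) + (m : ZMod N)) := by
  have h := powArrow_mk (m := m) (by omega) (c + (g : ZMod N) + (m : ZMod N)) c ?_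
  · have e1 : s(c, c + (g : ZMod N) + (m : ZMod N)) = s(c + (g : ZMod N) + (m : ZMod N), c) := Sym2.eq_swap
    have e2 : s(c + (m : ZMod N), c + (g : ZMod N) + (m : ZMod N)) = s(c + (g : ZMod N) + (m : ZMod N), c + (m : ZMod N)) := Sym2.eq_swap
    rw [e1, e2]
    exact h
  · intro t ht
    refine ⟨fun h => ?_, fun h => ?_, fun h => ?_⟩
    · have e : ((g + m : ℕ) : ZMod N) = ((t : ℕ) : ZMod N) := by push_cast; linear_combination h
      have := natCast_inj' (by omega) (by omega) e
      omega
    · have e : ((g + m : ℕ) : ZMod N) = ((t + 1 : ℕ) : ZMod N) := by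
        push_cast; linear_combination h
      have := natCast_inj' (by omega) (by omega) e
      omega
    · have e : ((t : ℕ) : ZMod N) = ((g + m + 1 : ℕ) : ZMod N) := by
        push_cast; linear_combination h
      have := natCast_inj' (by omega) (by omega) e
      omega

lemma sameComponent_refl {N m : ℕ} (d : Sym2 (ZMod N)) : SameComponent N m d d :=
  Relation.ReflTransGen.refl

lemma sameComponent_symm {N m : ℕ} {d e : Sym2 (ZMod N)}
    (h : SameComponent N m d e) : SameComponent N m e d :=
  by
  induction h with
  | refl => exact Relation.ReflTransGen.refl
  | tail _ hs ih => exact Relation.ReflTransGen.head hs.symm ih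

lemma sameComponent_trans {N m : ℕ} {d e f : Sym2 (ZMod N)}
    (h1 : SameComponent N m d e) (h2 : SameComponent N m e f) : SameComponent N m d f :=
  Relation.ReflTransGen.trans h1 h2

lemma step_same {N m g : ℕ} (hg2 : 2 ≤ g) (hgm : g + m + 2 ≤ N) (c : ZMod N) :
    SameComponent N m s(c, c + (g : ZMod N)) s(c + (m : ZMod N), c + (g : ZMod N) + (m : ZMod N)) :=
  Relation.ReflTransGen.tail (Relation.ReflTransGen.single (Or.inl (step1 hg2 hgm c)))
    (Or.inl (step2 hg2 hgm c))

lemma iter_same {N m g : ℕ} (hg2 : 2 ≤ g) (hgm : g + m + 2 ≤ N) (c : ZMod N) (w : ℕ) :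
    SameComponent N m s(c, c + (g : ZMod N))
      s(c + ((w * m : ℕ) : ZMod N), c + (g : ZMod N) + ((w * m : ℕ) : ZMod N)) := by
  induction w with
  | zero => simpa using sameComponent_refl _
  | succ w ih =>
    refine sameComponent_trans ih ?_
    have h := step_same hg2 hgm (c + ((w * m : ℕ) : ZMod N))
    have e1 : c + ((w * m : ℕ) : ZMod N) + (g : ZMod N)
        = c + (g : ZMod N) + ((w * m : ℕ) : ZMod N) := by ring
    have e2 : c + ((w * m : ℕ) : ZMod N) + (m : ZMod N) = c + (((w+1) * m : ℕ) : ZMod N) := by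
      push_cast; ring
    have e3 : c + (g : ZMod N) + ((w * m : ℕ) : ZMod N) + (m : ZMod N)
        = c + (g : ZMod N) + (((w+1) * m : ℕ) : ZMod N) := by push_cast; ring
    rw [e1, e2, e3] at h
    exact h

lemma componentOf_eq {N m : ℕ} {d e : Sym2 (ZMod N)} (h : SameComponent N m d e) :
    componentOf N m d = componentOf N m e := by
  ext x
  exact ⟨fun hx => sameComponent_trans (sameComponent_symm h) hx,
    fun hx => sameComponent_trans h hx⟩

lemma powArrow_shape {N m : ℕ} (hm : 2 ≤ m) {d d' : Sym2 (ZMod N)}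
    (h : PowArrow N m d d') : ∃ a b : ZMod N, d = s(a, b) ∧ d' = s(a, b + (m : ZMod N)) := by
  obtain ⟨p, ⟨harr, hsec⟩, h0, hm'⟩ := h
  obtain ⟨_, _, a', b', hp0, hp1⟩ := harr 0 (by omega)
  obtain ⟨a, b, hp0, hp1⟩ : ∃ a b : ZMod N, p 0 = s(a, b) ∧ p 1 = s(a, b + 1) := by
    rcases hp1 with h1 | h1
    · exact ⟨a', b', hp0, h1⟩
    · exact ⟨b', a', by rw [hp0, Sym2.eq_swap], by rw [h1, Sym2.eq_swap]⟩
  have key : ∀ t : ℕ, t + 1 ≤ m → p t = s(a, b + (t : ZMod N)) ∧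
      p (t + 1) = s(a, b + ((t+1 : ℕ) : ZMod N)) := by
    intro t
    induction t with
    | zero => intro _; simpa using ⟨hp0, hp1⟩
    | succ t ih =>
      intro ht
      obtain ⟨hq0, hq1⟩ := ih (by omega)
      refine ⟨hq1, ?_⟩
      obtain ⟨_, _, a', b', he, hstep⟩ := harr (t + 1) (by omega)
      have hne : tauD N (p (t + 1 + 1)) ≠ p t := by
        have := hsec (t + 1) (by omega) (by omega)
        simpa using this
      rw [hq1] at he
      have hcases : p (t + 1 + 1) = s(a, b + ((t+1:ℕ) : ZMod N) + 1) ∨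
          p (t + 1 + 1) = s(a + 1, b + ((t+1:ℕ) : ZMod N)) := by
        rcases Sym2.eq_iff.mp he with ⟨h1, h2⟩ | ⟨h1, h2⟩
        · rcases hstep with h3 | h3
          · left; rw [h3, ← h1, ← h2]
          · right; rw [h3, ← h1, ← h2]
        · rcases hstep with h3 | h3
          · right; rw [h3, ← h1, ← h2, Sym2.eq_swap]
          · left; rw [h3, ← h1, ← h2, Sym2.eq_swap]
      rcases hcases with hc | hc
      · rw [hc]; congr 1; push_cast; ring
      · exfalso
        apply hne
        rw [hc, hq0, tauD, Sym2.map_pair_eq]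
        congr 1 <;> push_cast <;> ring
  obtain ⟨_, hlast⟩ := key (m - 1) (by omega)
  refine ⟨a, b, by rwa [← h0], ?_⟩
  rw [← hm']
  have : m - 1 + 1 = m := by omega
  rw [this] at hlast
  rw [hlast]

lemma parity_invariant {N m : ℕ} (hm2 : 2 ≤ m) (hme : Even m) (h2 : (2 : ℕ) ∣ N)
    {d d' : Sym2 (ZMod N)} (h : SameComponent N m d d') :
    d.map (ZMod.castHom h2 (ZMod 2)) = d'.map (ZMod.castHom h2 (ZMod 2)) := by
  have key : ∀ {x y : Sym2 (ZMod N)}, PowArrow N m x y →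
      x.map (ZMod.castHom h2 (ZMod 2)) = y.map (ZMod.castHom h2 (ZMod 2)) := by
    intro x y hxy
    obtain ⟨a, b, hx, hy⟩ := powArrow_shape hm2 hxy
    rw [hx, hy, Sym2.map_pair_eq, Sym2.map_pair_eq]
    have : (ZMod.castHom h2 (ZMod 2)) (b + (m : ZMod N)) = (ZMod.castHom h2 (ZMod 2)) b := by
      rw [map_add, map_natCast]
      have : ((m : ℕ) : ZMod 2) = 0 := (ZMod.natCast_eq_zero_iff m 2).mpr hme.two_dvd
      rw [this, add_zero]
    rw [this]
  induction h with
  | refl => rfl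
  | tail _ hstep ih =>
    rcases hstep with h' | h'
    · exact ih.trans (key h')
    · exact ih.trans (key h').symm

lemma exists_w (n m : ℕ) (hm : Even m) (hmo : Odd (m / 2)) (j : ℤ) (hj : Even j) :
    ∃ w : ℕ, ((w * m : ℕ) : ZMod (n * m + 2)) = ((j : ℤ) : ZMod (n * m + 2)) := by
  set N : ℕ := n * m + 2 with hN
  obtain ⟨u, hu⟩ := hj
  have key : (((-(n : ℤ) * u) * m - j) : ℤ) = (-u) * (N : ℤ) := by
    have hNZ : (N : ℤ) = n * m + 2 := by exact_mod_cast hN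
    rw [hNZ, hu]; ring
  set v : ℤ := -(n : ℤ) * u with hv
  have hNpos : 0 < (N : ℤ) := by positivity
  set w : ℕ := (v % N).toNat with hw
  refine ⟨w, ?_⟩
  have hwv : ((w : ℤ)) = v % N := Int.toNat_of_nonneg (Int.emod_nonneg v (by omega))
  have c1 : ((w : ℤ) : ZMod N) = (v : ZMod N) := by
    rw [hwv]
    have : (N : ℤ) ∣ (v % N - v) := by
      have := Int.emod_emod_of_dvd v (dvd_refl (N : ℤ))
      exact Dvd.intro (-(v / N)) (by rw [Int.emod_def]; ring)
    calc ((v % N : ℤ) : ZMod N) = ((v % N - v : ℤ) : ZMod N) + ((v : ℤ) : ZMod N) := by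
          push_cast; ring
      _ = (v : ZMod N) := by
          rw [(ZMod.intCast_zmod_eq_zero_iff_dvd _ N).mpr this, zero_add]
  have c2 : ((v * m : ℤ) : ZMod N) = ((j : ℤ) : ZMod N) := by
    have : (N : ℤ) ∣ (v * m - j) := ⟨-u, by rw [key]; ring⟩
    calc ((v * m : ℤ) : ZMod N) = ((v * m - j : ℤ) : ZMod N) + ((j : ℤ) : ZMod N) := by
          push_cast; ring
      _ = ((j : ℤ) : ZMod N) := by
          rw [(ZMod.intCast_zmod_eq_zero_iff_dvd _ N).mpr this, zero_add]
  calc ((w * m : ℕ) : ZMod N) = ((w : ℤ) : ZMod N) * ((m : ℤ) : ZMod N) := by push_cast; ring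
    _ = ((v * m : ℤ) : ZMod N) := by rw [c1]; push_cast; ring
    _ = _ := c2

theorem stmt_15 (n m : ℕ) (hn : 2 ≤ n) (hm : Even m) (hmo : Odd (m / 2)) :
    {S | S ∈ components (n * m + 2) m ∧
        ∃ e ∈ S, e ∈ tauOrbit (n * m + 2)
          s((1 : ZMod (n * m + 2)), ((m / 2 + 2 : ℕ) : ZMod (n * m + 2)))}.ncard = 2 ∧
    s((1 : ZMod (n * m + 2)), ((n * m + 4 - (m / 2 + 2) : ℕ) : ZMod (n * m + 2))) ∈
      taumOrbit (n * m + 2) m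
        s((1 : ZMod (n * m + 2)), ((m / 2 + 2 : ℕ) : ZMod (n * m + 2))) ∧
    SameComponent (n * m + 2) m
      s((1 : ZMod (n * m + 2)), ((m / 2 + 2 : ℕ) : ZMod (n * m + 2)))
      s((1 : ZMod (n * m + 2)), ((n * m + 4 - (m / 2 + 2) : ℕ) : ZMod (n * m + 2))) := by
  have hmod : m % 2 = 0 := Nat.even_iff.mp hm
  have hnm : 2 * m ≤ n * m := Nat.mul_le_mul_right m hn
  obtain ⟨r, hr0⟩ := id hmo
  have hkey : m = 2 * (m / 2) := by omega
  set N := n * m + 2 with hNdef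
  generalize hsv : m / 2 = sv at hr0 hkey ⊢
  have hm2 : 2 ≤ m := by omega
  have hg2 : 2 ≤ sv + 1 := by omega
  have hgm : (sv + 1) + m + 2 ≤ N := by omega
  -- cast facts
  have jcast : ((sv + 2 : ℕ) : ZMod N) = 1 + ((sv + 1 : ℕ) : ZMod N) := by
    push_cast; ring
  have jinv_nat : (n * m + 4 - (sv + 2)) + sv = N := by omega
  have jinv_cast : ((n * m + 4 - (sv + 2) : ℕ) : ZMod N) = -((sv : ℕ) : ZMod N) := by
    have h0 : ((n * m + 4 - (sv + 2) : ℕ) : ZMod N) + ((sv : ℕ) : ZMod N) = 0 := by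
      rw [← Nat.cast_add, jinv_nat]; exact ZMod.natCast_self N
    linear_combination h0
  -- the key translation amount
  have hsZ : ((sv : ℕ) : ℤ) = 2 * (r : ℤ) + 1 := by exact_mod_cast hr0
  have hjeven : Even (-(((sv : ℕ) : ℤ) + 1)) := ⟨-(r : ℤ) - 1, by rw [hsZ]; ring⟩
  obtain ⟨w, hw⟩ := exists_w n m hm hmo (-(((sv : ℕ) : ℤ) + 1)) hjeven
  have hw' : ((w * m : ℕ) : ZMod N) = -((sv : ℕ) : ZMod N) - 1 := by
    rw [hw]; push_cast; ring
  have hw2 : ((w : ℕ) : ZMod N) * ((m : ℕ) : ZMod N) = -((sv : ℕ) : ZMod N) - 1 := by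
    rw [← hw']; push_cast; ring
  -- Part 2: taumOrbit
  have part2 : s((1 : ZMod N), ((n * m + 4 - (sv + 2) : ℕ) : ZMod N)) ∈
      taumOrbit N m s((1 : ZMod N), ((sv + 2 : ℕ) : ZMod N)) := by
    refine ⟨-(w : ℤ), ?_⟩
    rw [Sym2.map_pair_eq]
    have c1 : (1 : ZMod N) - ((-(w : ℤ) : ℤ) : ZMod N) * ((m : ℕ) : ZMod N)
        = ((n * m + 4 - (sv + 2) : ℕ) : ZMod N) := by
      rw [jinv_cast]; push_cast; linear_combination hw2
    have c2 : ((sv + 2 : ℕ) : ZMod N) - ((-(w : ℤ) : ℤ) : ZMod N) * ((m : ℕ) : ZMod N)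
        = 1 := by
      push_cast; push_cast at hw2; linear_combination hw2
    rw [c1, c2, Sym2.eq_swap]
  -- Part 3: same component
  have part3 : SameComponent N m s((1 : ZMod N), ((sv + 2 : ℕ) : ZMod N))
      s((1 : ZMod N), ((n * m + 4 - (sv + 2) : ℕ) : ZMod N)) := by
    have h := iter_same hg2 hgm (1 : ZMod N) w
    have e3 : (1 : ZMod N) + ((sv + 1 : ℕ) : ZMod N) + ((w * m : ℕ) : ZMod N) = 1 := by
      rw [hw']; push_cast; ring
    rw [e3] at h
    have e1 : (1 : ZMod N) + ((sv + 1 : ℕ) : ZMod N) = ((sv + 2 : ℕ) : ZMod N) := jcast.symm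
    rw [e1] at h
    have e2 : (1 : ZMod N) + ((w * m : ℕ) : ZMod N)
        = ((n * m + 4 - (sv + 2) : ℕ) : ZMod N) := by
      rw [jinv_cast, hw']; ring
    rw [e2] at h
    have heq : s(((n * m + 4 - (sv + 2) : ℕ) : ZMod N), (1 : ZMod N))
        = s((1 : ZMod N), ((n * m + 4 - (sv + 2) : ℕ) : ZMod N)) := Sym2.eq_swap
    rw [heq] at h
    exact h
  refine ⟨?_, part2, part3⟩
  -- Part 1
  have hsltN2 : sv + 3 < N := by omega
  -- generic diagonal fact
  have hdiagE : ∀ (c : ZMod N), IsDiag N s(c, c + ((sv + 1 : ℕ) : ZMod N)) := by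
    intro c
    refine isDiag_mk (fun h => ?_) (fun h => ?_) (fun h => ?_)
    · have e : ((sv + 1 : ℕ) : ZMod N) = ((0 : ℕ) : ZMod N) := by
        push_cast at h ⊢; linear_combination -h
      have := natCast_inj' (by omega) (by omega) e; omega
    · have e : ((sv + 2 : ℕ) : ZMod N) = ((0 : ℕ) : ZMod N) := by
        push_cast at h ⊢; linear_combination -h
      have := natCast_inj' (by omega) (by omega) e; omega
    · have e : ((sv + 1 : ℕ) : ZMod N) = ((1 : ℕ) : ZMod N) := by
        push_cast at h ⊢; linear_combination h
      have := natCast_inj' (by omega) (by omega) e; omega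
  -- parity component lemma
  have hpar : ∀ k : ℤ,
      (Even k → SameComponent N m s(1 - ((k : ℤ) : ZMod N), ((sv + 2 : ℕ) : ZMod N) - ((k : ℤ) : ZMod N)) s((1 : ZMod N), ((sv + 2 : ℕ) : ZMod N))) ∧
      (Odd k → SameComponent N m s(1 - ((k : ℤ) : ZMod N), ((sv + 2 : ℕ) : ZMod N) - ((k : ℤ) : ZMod N)) s((0 : ZMod N), ((sv + 1 : ℕ) : ZMod N))) := by
    intro k
    have esrc : (1 : ZMod N) - ((k : ℤ) : ZMod N) + ((sv + 1 : ℕ) : ZMod N)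
        = ((sv + 2 : ℕ) : ZMod N) - ((k : ℤ) : ZMod N) := by push_cast; ring
    constructor
    · intro hk
      obtain ⟨w', hw'1⟩ := exists_w n m hm (hsv ▸ hmo) k hk
      have h := iter_same hg2 hgm (1 - ((k : ℤ) : ZMod N)) w'
      rw [esrc] at h
      have f1 : (1 : ZMod N) - ((k : ℤ) : ZMod N) + ((w' * m : ℕ) : ZMod N) = 1 := by
        rw [hw'1]; ring
      rw [f1] at h
      have f2 : ((sv + 2 : ℕ) : ZMod N) - ((k : ℤ) : ZMod N) + ((w' * m : ℕ) : ZMod N)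
          = ((sv + 2 : ℕ) : ZMod N) := by rw [hw'1]; ring
      rw [f2] at h
      exact h
    · intro hk
      have hk' : Even (k - 1) := by
        obtain ⟨t, ht⟩ := hk; exact ⟨t, by omega⟩
      obtain ⟨w', hw'1⟩ := exists_w n m hm (hsv ▸ hmo) (k - 1) hk'
      have h := iter_same hg2 hgm (1 - ((k : ℤ) : ZMod N)) w'
      rw [esrc] at h
      have f1 : (1 : ZMod N) - ((k : ℤ) : ZMod N) + ((w' * m : ℕ) : ZMod N) = 0 := by
        rw [hw'1]; push_cast; ring
      rw [f1] at h
      have f2 : ((sv + 2 : ℕ) : ZMod N) - ((k : ℤ) : ZMod N) + ((w' * m : ℕ) : ZMod N)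
          = ((sv + 1 : ℕ) : ZMod N) := by rw [hw'1]; push_cast; ring
      rw [f2] at h
      exact h
  -- the two distinguished diagonals
  have hd1 : IsDiag N s((1 : ZMod N), ((sv + 2 : ℕ) : ZMod N)) := by
    have := hdiagE 1
    rwa [← jcast] at this
  have hd0 : IsDiag N s((0 : ZMod N), ((sv + 1 : ℕ) : ZMod N)) := by
    have := hdiagE 0
    rwa [zero_add] at this
  -- distinctness via parity invariant
  have hdvd : (2 : ℕ) ∣ N := by
    obtain ⟨t, ht⟩ := hm
    exact ⟨n * t + 1, by rw [hNdef, ht]; ring⟩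
  have hne : componentOf N m s((1 : ZMod N), ((sv + 2 : ℕ) : ZMod N))
      ≠ componentOf N m s((0 : ZMod N), ((sv + 1 : ℕ) : ZMod N)) := by
    intro hEq
    have hmem : s((0 : ZMod N), ((sv + 1 : ℕ) : ZMod N))
        ∈ componentOf N m s((0 : ZMod N), ((sv + 1 : ℕ) : ZMod N)) := sameComponent_refl _
    rw [← hEq] at hmem
    have hinv := parity_invariant hm2 hm hdvd hmem
    rw [Sym2.map_pair_eq, Sym2.map_pair_eq] at hinv
    have v1 : (ZMod.castHom hdvd (ZMod 2)) (1 : ZMod N) = 1 := map_one _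
    have v2 : (ZMod.castHom hdvd (ZMod 2)) ((sv + 2 : ℕ) : ZMod N) = 1 := by
      rw [map_natCast]
      rw [← ZMod.natCast_mod]
      have : (sv + 2) % 2 = 1 := by omega
      rw [this, Nat.cast_one]
    have v3 : (ZMod.castHom hdvd (ZMod 2)) (0 : ZMod N) = 0 := map_zero _
    have v4 : (ZMod.castHom hdvd (ZMod 2)) ((sv + 1 : ℕ) : ZMod N) = 0 := by
      rw [map_natCast]
      rw [← ZMod.natCast_mod]
      have : (sv + 1) % 2 = 0 := by omega
      rw [this, Nat.cast_zero]
    rw [v1, v2, v3, v4] at hinv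
    rcases Sym2.eq_iff.mp hinv with ⟨h1, _⟩ | ⟨h1, _⟩ <;> exact one_ne_zero h1
  -- the set of components equals the pair
  have hT : {S | S ∈ components N m ∧
      ∃ e ∈ S, e ∈ tauOrbit N s((1 : ZMod N), ((sv + 2 : ℕ) : ZMod N))}
      = {componentOf N m s((1 : ZMod N), ((sv + 2 : ℕ) : ZMod N)),
         componentOf N m s((0 : ZMod N), ((sv + 1 : ℕ) : ZMod N))} := by
    ext S
    constructor
    · rintro ⟨⟨d, _, rfl⟩, e, he, k, hek⟩
      rw [Sym2.map_pair_eq] at hek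
      have hde : componentOf N m d = componentOf N m e := componentOf_eq he
      rcases Int.even_or_odd k with hk | hk
      · left
        rw [hde, hek]
        exact componentOf_eq ((hpar k).1 hk)
      · right
        rw [hde, hek]
        exact componentOf_eq ((hpar k).2 hk)
    · rintro (rfl | rfl)
      · refine ⟨⟨_, hd1, rfl⟩, s((1 : ZMod N), ((sv + 2 : ℕ) : ZMod N)),
          sameComponent_refl _, 0, ?_⟩
        rw [Sym2.map_pair_eq]
        norm_num
      · refine ⟨⟨_, hd0, rfl⟩, s((0 : ZMod N), ((sv + 1 : ℕ) : ZMod N)),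
          sameComponent_refl _, 1, ?_⟩
        rw [Sym2.map_pair_eq]
        have g1 : (1 : ZMod N) - ((1 : ℤ) : ZMod N) = 0 := by push_cast; ring
        have g2 : ((sv + 2 : ℕ) : ZMod N) - ((1 : ℤ) : ZMod N) = ((sv + 1 : ℕ) : ZMod N) := by
          push_cast; ring
        rw [g1, g2]
  rw [hT]
  exact Set.ncard_pair hne
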